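/- For fixed y > 0, the function x₀ ↦ (∂G_H/∂y₀)((x,y),(x₀,0)) = −(1/(2L))·Im(cot((π/(2L))(x + iy − x₀))) is the Poisson-type kernel for the periodic half-plane: for f(x₀) = cos(πx₀/L), the integral ∫_{−L}^{L} (∂G_H/∂y₀)((x,y),(x₀,0))·f(x₀) dx₀ equals cos(πx/L)·exp(−πy/L). -/

import Mathlib

open Real intervalIntegral

noncomputable def cc (L : ℝ) : ℂ := (↑π / ↑L) * Complex.I
noncomputable def uu (L t : ℝ) : ℂ := Complex.exp (cc L * t)
noncomputable def QQ (L x y : ℝ) : ℂ := Complex.exp (cc L * (↑x + ↑y * Complex.I))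
noncomputable def GG (L x y t : ℝ) : ℂ :=
  (Complex.I/(4*L)) * ( uu L t / cc L + (cc L)⁻¹ * (uu L t)⁻¹ + 2*QQ L x y*t
    + (2*((QQ L x y)^2+1)/(cc L * QQ L x y)) * Complex.log (1 - QQ L x y * (uu L t)⁻¹) )

lemma hQz (L x y : ℝ) : cc L * (↑x + ↑y * Complex.I) = ↑(-(π*y/L)) + ↑(π*x/L) * Complex.I := by
  unfold cc; push_cast; linear_combination (↑π/↑L*↑y : ℂ) * Complex.I_mul_I

lemma habsQ (L x y : ℝ) (hL : 0 < L) (hy : 0 < y) : ‖QQ L x y‖ < 1 := by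
  rw [QQ, hQz, Complex.norm_exp]
  simp only [Complex.add_re, Complex.ofReal_re, Complex.mul_re, Complex.I_re, Complex.I_im,
    Complex.ofReal_im, mul_zero, mul_one, zero_sub]
  rw [Real.exp_lt_one_iff]
  have : 0 < π*y/L := by positivity
  nlinarith [Real.pi_pos]

lemma habsu (L t : ℝ) : ‖uu L t‖ = 1 := by
  rw [uu, Complex.norm_exp]
  simp [cc, Complex.mul_re, Complex.div_re]

lemma hu0 (L t : ℝ) : uu L t ≠ 0 := Complex.exp_ne_zero _
lemma hQ0 (L x y : ℝ) : QQ L x y ≠ 0 := Complex.exp_ne_zero _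

lemma huQ (L x y t : ℝ) (hL : 0 < L) (hy : 0 < y) : uu L t - QQ L x y ≠ 0 := by
  have h1 := habsQ L x y hL hy
  have h2 := habsu L t
  intro h
  rw [sub_eq_zero] at h
  rw [← h, h2] at h1
  exact lt_irrefl _ h1

lemma hslit (L x y t : ℝ) (hL : 0 < L) (hy : 0 < y) :
    1 - QQ L x y * (uu L t)⁻¹ ∈ Complex.slitPlane := by
  have : ‖QQ L x y * (uu L t)⁻¹‖ < 1 := by
    rw [norm_mul, norm_inv, habsu]
    simpa using habsQ L x y hL hy
  rw [Complex.mem_slitPlane_iff]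
  left
  have hre := Complex.re_le_norm (QQ L x y * (uu L t)⁻¹)
  simp only [Complex.sub_re, Complex.one_re]
  linarith

lemma hc0 (L : ℝ) (hL : 0 < L) : cc L ≠ 0 := by
  unfold cc
  apply mul_ne_zero _ Complex.I_ne_zero
  simp [Real.pi_ne_zero, ne_of_gt hL]

lemma hu_deriv (L : ℝ) (s : ℝ) : HasDerivAt (fun r : ℝ => uu L r) (cc L * uu L s) s := by
  have hid : HasDerivAt (fun r : ℝ => cc L * (r:ℂ)) (cc L) s := by
    simpa using (Complex.ofRealCLM.hasDerivAt (x := s)).const_mul (cc L)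
  simpa [uu, mul_comm] using hid.cexp

lemma hG_deriv (L x y t : ℝ) (hL : 0 < L) (hy : 0 < y) :
    HasDerivAt (GG L x y) ((Complex.I/(4*L)) * (uu L t - (uu L t)⁻¹ + 2*QQ L x y
      + 2*((QQ L x y)^2+1)/(uu L t - QQ L x y))) t := by
  have hc := hc0 L hL
  have hu0' := hu0 L t
  have hQ0' := hQ0 L x y
  have huQ' := huQ L x y t hL hy
  have hA : HasDerivAt (fun s : ℝ => uu L s / cc L) (cc L * uu L t / cc L) t :=
    (hu_deriv L t).div_const _
  have hinv : HasDerivAt (fun s : ℝ => (uu L s)⁻¹) (-(cc L * uu L t)/(uu L t)^2) t := by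
    have h2 := (hasDerivAt_inv hu0').scomp t (hu_deriv L t)
    convert h2 using 1
    · rfl
    · rfl
    · rw [smul_eq_mul]; ring
  have hB : HasDerivAt (fun s : ℝ => (cc L)⁻¹ * (uu L s)⁻¹)
      ((cc L)⁻¹ * (-(cc L * uu L t)/(uu L t)^2)) t := hinv.const_mul _
  have hC : HasDerivAt (fun s : ℝ => 2*QQ L x y*(s:ℂ)) (2*QQ L x y) t := by
    simpa using (Complex.ofRealCLM.hasDerivAt (x := t)).const_mul (2*QQ L x y)
  have hinner : HasDerivAt (fun s : ℝ => 1 - QQ L x y * (uu L s)⁻¹)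
      (-(QQ L x y * (-(cc L * uu L t)/(uu L t)^2))) t := by
    simpa using ((hinv.const_mul (QQ L x y)).const_sub 1)
  have hlog := (hinner.clog_real (hslit L x y t hL hy)).const_mul
      (2*((QQ L x y)^2+1)/(cc L * QQ L x y))
  have hcomb := (((hA.add hB).add hC).add hlog).const_mul ((Complex.I : ℂ)/(4*L))
  have hL' : (L:ℂ) ≠ 0 := by exact_mod_cast ne_of_gt hL
  have key : (1 : ℂ) - QQ L x y * (uu L t)⁻¹ = (uu L t - QQ L x y) * (uu L t)⁻¹ := by
    field_simp
  have e1 : cc L * uu L t / cc L = uu L t := by field_simp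
  have e2 : (cc L)⁻¹ * (-(cc L * uu L t) / uu L t ^ 2) = -(uu L t)⁻¹ := by
    field_simp
  have e3 : 2 * (QQ L x y ^ 2 + 1) / (cc L * QQ L x y) *
      (-(QQ L x y * (-(cc L * uu L t) / uu L t ^ 2)) / (1 - QQ L x y * (uu L t)⁻¹))
      = 2 * (QQ L x y ^ 2 + 1) / (uu L t - QQ L x y) := by
    rw [key]; field_simp
  rw [e1, e2, e3] at hcomb
  unfold GG
  simpa [sub_eq_add_neg] using hcomb

lemma hcot (L x y t : ℝ) (hL : 0 < L) (hy : 0 < y) :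
    Complex.cot (↑(π/(2*L)) * ((↑x + ↑y*Complex.I) - ↑t))
      = -Complex.I * (uu L t + QQ L x y) / (uu L t - QQ L x y) := by
  set w : ℂ := ↑(π/(2*L)) * ((↑x + ↑y*Complex.I) - ↑t) with hw
  set E : ℂ := Complex.exp (w * Complex.I) with hE
  have hL' : (L:ℂ) ≠ 0 := by exact_mod_cast ne_of_gt hL
  have hE0 : E ≠ 0 := Complex.exp_ne_zero _
  have hu0' := hu0 L t
  have huQ' := huQ L x y t hL hy
  have hE2 : E * E * uu L t = QQ L x y := by
    rw [hE, ← Complex.exp_add, uu, ← Complex.exp_add, QQ]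
    congr 1
    rw [hw, cc]
    push_cast
    ring
  have hsin0 : Complex.sin w ≠ 0 := by
    rw [Complex.sin, show -w*Complex.I = -(w*Complex.I) by ring, Complex.exp_neg, ← hE]
    have : (E⁻¹ - E) = (uu L t - QQ L x y) / (E * uu L t) := by
      field_simp
      linear_combination (-1) * hE2
    rw [this]
    exact div_ne_zero (mul_ne_zero (div_ne_zero huQ' (mul_ne_zero hE0 hu0')) Complex.I_ne_zero) two_ne_zero
  rw [Complex.cot_eq_cos_div_sin, div_eq_div_iff hsin0 huQ']
  rw [Complex.sin, Complex.cos, show -w*Complex.I = -(w*Complex.I) by ring,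
    Complex.exp_neg, ← hE]
  field_simp
  linear_combination 2 * hE2 +
    (uu L t + QQ L x y - E^2*(uu L t) - E^2*(QQ L x y)) * Complex.I_sq

lemma hcosr (L t : ℝ) : (Real.cos (π*t/L) : ℂ) = (uu L t + (uu L t)⁻¹)/2 := by
  rw [Complex.ofReal_cos]
  have h1 : (↑(π*t/L) : ℂ) * Complex.I = cc L * ↑t := by rw [cc]; push_cast; ring
  have h2 : -(↑(π*t/L) : ℂ) * Complex.I = -(cc L * ↑t) := by rw [← h1]; ring
  rw [Complex.cos, h1, h2, Complex.exp_neg]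
  rfl

lemma hDim (L x y t : ℝ) (hL : 0 < L) (hy : 0 < y) :
    (-(1 / (2 * L)) * (Complex.cot (↑(π/(2*L)) * ((↑x + ↑y*Complex.I) - ↑t))).im)
        * Real.cos (π * t / L)
      = ((Complex.I/(4*(L:ℂ))) * (uu L t - (uu L t)⁻¹ + 2*QQ L x y
          + 2*((QQ L x y)^2+1)/(uu L t - QQ L x y))).im := by
  have hL' : (L:ℂ) ≠ 0 := by exact_mod_cast ne_of_gt hL
  have hu0' := hu0 L t
  have huQ' := huQ L x y t hL hy
  have step : (Complex.I/(4*(L:ℂ))) * (uu L t - (uu L t)⁻¹ + 2*QQ L x y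
          + 2*((QQ L x y)^2+1)/(uu L t - QQ L x y))
      = ↑(-(1/(2*L)) : ℝ) * ↑(Real.cos (π*t/L))
        * (-Complex.I * (uu L t + QQ L x y) / (uu L t - QQ L x y)) := by
    rw [hcosr]
    push_cast
    field_simp
    ring
  rw [hcot L x y t hL hy, step, ← Complex.ofReal_mul, Complex.im_ofReal_mul]
  ring

lemma hcont (L x y : ℝ) (hL : 0 < L) (hy : 0 < y) :
    Continuous (fun t : ℝ => ((Complex.I/(4*(L:ℂ))) * (uu L t - (uu L t)⁻¹ + 2*QQ L x y
          + 2*((QQ L x y)^2+1)/(uu L t - QQ L x y))).im) := by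
  have hu : Continuous (fun t : ℝ => uu L t) := by
    unfold uu
    exact Complex.continuous_exp.comp (by continuity)
  apply Complex.continuous_im.comp
  apply Continuous.mul continuous_const
  apply Continuous.add
  · apply Continuous.add
    · exact (hu.sub (hu.inv₀ (fun t => hu0 L t)))
    · exact continuous_const
  · apply Continuous.div continuous_const (hu.sub continuous_const)
    exact fun t => huQ L x y t hL hy

lemma huL (L : ℝ) (hL : 0 < L) : uu L L = -1 := by
  have hL' : (L:ℂ) ≠ 0 := by exact_mod_cast ne_of_gt hL
  rw [uu, show cc L * (L:ℂ) = ↑π * Complex.I by rw [cc]; field_simp]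
  exact Complex.exp_pi_mul_I

lemma huLneg (L : ℝ) (hL : 0 < L) : uu L (-L) = -1 := by
  have hL' : (L:ℂ) ≠ 0 := by exact_mod_cast ne_of_gt hL
  rw [uu, show cc L * ((-L:ℝ):ℂ) = -(↑π * Complex.I) by rw [cc]; push_cast; field_simp,
    Complex.exp_neg, Complex.exp_pi_mul_I]
  norm_num

lemma hGdiff (L x y : ℝ) (hL : 0 < L) :
    GG L x y L - GG L x y (-L) = Complex.I * QQ L x y := by
  have hL' : (L:ℂ) ≠ 0 := by exact_mod_cast ne_of_gt hL
  rw [GG, GG, huL L hL, huLneg L hL]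
  push_cast
  field_simp
  ring

lemma hQre (L x y : ℝ) : (Complex.I * QQ L x y).im = Real.cos (π*x/L) * Real.exp (-π*y/L) := by
  have : (Complex.I * QQ L x y).im = (QQ L x y).re := by simp
  rw [this, QQ, hQz, Complex.exp_re]
  have h1 : ((↑(-(π*y/L)) + ↑(π*x/L) * Complex.I : ℂ)).re = -(π*y/L) := by simp
  have h2 : ((↑(-(π*y/L)) + ↑(π*x/L) * Complex.I : ℂ)).im = π*x/L := by simp
  rw [h1, h2]
  rw [mul_comm]
  ring_nf

/-- The Poisson-type kernel for the periodic half-plane reproduces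
`cos(πx/L) exp(-πy/L)` from the boundary data `f(x₀) = cos(πx₀/L)`:
`∫_{-L}^{L} (∂G_H/∂y₀)((x,y),(x₀,0)) cos(πx₀/L) dx₀ = cos(πx/L) exp(-πy/L)`,
where `(∂G_H/∂y₀)((x,y),(x₀,0)) = -(1/(2L)) Im(cot((π/(2L))(x + iy - x₀)))`. -/
theorem stmt_5 (L : ℝ) (hL : 0 < L) (x y : ℝ) (hy : 0 < y) :
    ∫ x₀ in (-L)..L,
        (-(1 / (2 * L)) * (Complex.cot ((π / (2 * L)) *
            (((x : ℂ) + y * Complex.I) - (x₀ : ℂ)))).im) * Real.cos (π * x₀ / L)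
      = Real.cos (π * x / L) * Real.exp (-π * y / L) := by
  have hfun : ∀ t : ℝ,
      (-(1 / (2 * L)) * (Complex.cot ((π / (2 * L)) *
            (((x : ℂ) + y * Complex.I) - (t : ℂ)))).im) * Real.cos (π * t / L)
      = ((Complex.I/(4*(L:ℂ))) * (uu L t - (uu L t)⁻¹ + 2*QQ L x y
          + 2*((QQ L x y)^2+1)/(uu L t - QQ L x y))).im := by
    intro t
    rw [show ((π : ℂ) / (2 * (L:ℂ)) * (((x : ℂ) + (y:ℂ) * Complex.I) - (t : ℂ)) : ℂ)
        = ↑(π/(2*L)) * ((↑x + ↑y*Complex.I) - ↑t) by push_cast; ring]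
    exact hDim L x y t hL hy
  have hrw : (∫ x₀ in (-L)..L,
        (-(1 / (2 * L)) * (Complex.cot ((π / (2 * L)) *
            (((x : ℂ) + y * Complex.I) - (x₀ : ℂ)))).im) * Real.cos (π * x₀ / L))
      = ∫ t in (-L)..L, ((Complex.I/(4*(L:ℂ))) * (uu L t - (uu L t)⁻¹ + 2*QQ L x y
          + 2*((QQ L x y)^2+1)/(uu L t - QQ L x y))).im := by
    apply intervalIntegral.integral_congr
    intro t _
    exact hfun t
  rw [hrw]
  have hder : ∀ t ∈ Set.uIcc (-L) L, HasDerivAt (fun s => (GG L x y s).im)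
      (((Complex.I/(4*(L:ℂ))) * (uu L t - (uu L t)⁻¹ + 2*QQ L x y
          + 2*((QQ L x y)^2+1)/(uu L t - QQ L x y))).im) t := by
    intro t _
    have h := hG_deriv L x y t hL hy
    have := (Complex.imCLM.hasFDerivAt.comp t h.hasFDerivAt).hasDerivAt
    simpa [Function.comp_def] using this
  rw [intervalIntegral.integral_eq_sub_of_hasDerivAt hder
    ((hcont L x y hL hy).intervalIntegrable _ _)]
  rw [← Complex.sub_im, hGdiff L x y hL, hQre]
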